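/- Let β̂₁, β̂₂, β̂₃ ∈ ℝ. Then the inequality β̂₁(nn:D)² + β̂₂|D|² + β̂₃|D·n|² ≥ 0 holds for every symmetric traceless 3×3 matrix D and every unit vector n ∈ ℝ³ if and only if β̂₂ ≥ 0, 2β̂₂ + β̂₃ ≥ 0, and (3/2)β̂₂ + β̂₃ + β̂₁ ≥ 0. -/

import Mathlib

open Matrix

noncomputable def frob (A B : Matrix (Fin 3) (Fin 3) ℝ) : ℝ := ∑ i, ∑ j, A i j * B i j

private lemma key (β₁ β₂ β₃ a v0 v1 v2 n0 n1 n2 d00 d01 d02 d11 d12 d22 : ℝ)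
    (hb2 : 0 ≤ β₂) (hb23 : 0 ≤ 2 * β₂ + β₃) (hb123 : 0 ≤ 3 / 2 * β₂ + β₃ + β₁)
    (ha : a = n0*v0 + n1*v1 + n2*v2)
    (hv0 : v0 = d00*n0 + d01*n1 + d02*n2)
    (hv1 : v1 = d01*n0 + d11*n1 + d12*n2)
    (hv2 : v2 = d02*n0 + d12*n1 + d22*n2)
    (hn : n0^2 + n1^2 + n2^2 = 1) (hd : d00 + d11 + d22 = 0) :
    0 ≤ β₁ * a^2 + β₂ * (d00^2+d01^2+d02^2+d01^2+d11^2+d12^2+d02^2+d12^2+d22^2) + β₃ * (v0^2+v1^2+v2^2) := by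
  have hS : (d00^2+d01^2+d02^2+d01^2+d11^2+d12^2+d02^2+d12^2+d22^2) + a^2/2 - 2*(v0^2+v1^2+v2^2) = (d00 - n0*v0 - v0*n0 + (a/2)*n0*n0 + a/2)^2 + (d01 - n0*v1 - v0*n1 + (a/2)*n0*n1)^2 + (d02 - n0*v2 - v0*n2 + (a/2)*n0*n2)^2 + (d01 - n1*v0 - v1*n0 + (a/2)*n1*n0)^2 + (d11 - n1*v1 - v1*n1 + (a/2)*n1*n1 + a/2)^2 + (d12 - n1*v2 - v1*n2 + (a/2)*n1*n2)^2 + (d02 - n2*v0 - v2*n0 + (a/2)*n2*n0)^2 + (d12 - n2*v1 - v2*n1 + (a/2)*n2*n1)^2 + (d22 - n2*v2 - v2*n2 + (a/2)*n2*n2 + a/2)^2 := by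
    linear_combination (((-1:ℝ)/4)*a*n0*n0*n0*n0 + ((-1:ℝ)/2)*a*n0*n0*n1*n1 + ((-1:ℝ)/2)*a*n0*n0*n2*n2 + ((-1:ℝ)/2)*a*n0*n0 + ((-1:ℝ)/4)*a*n1*n1*n1*n1 + ((-1:ℝ)/2)*a*n1*n1*n2*n2 + ((-1:ℝ)/2)*a*n1*n1 + ((-1:ℝ)/4)*a*n2*n2*n2*n2 + ((-1:ℝ)/2)*a*n2*n2 + ((-1:ℝ)/4)*a + ((-1:ℝ)/4)*v0*n0*n0*n0*n0*n0 + ((-1:ℝ)/2)*v0*n0*n0*n0*n1*n1 + ((-1:ℝ)/2)*v0*n0*n0*n0*n2*n2 + ((3:ℝ)/2)*v0*n0*n0*n0 + ((-1:ℝ)/4)*v0*n0*n1*n1*n1*n1 + ((-1:ℝ)/2)*v0*n0*n1*n1*n2*n2 + ((3:ℝ)/2)*v0*n0*n1*n1 + ((-1:ℝ)/4)*v0*n0*n2*n2*n2*n2 + ((3:ℝ)/2)*v0*n0*n2*n2 + ((7:ℝ)/4)*v0*n0 + ((-1:ℝ)/4)*v1*n0*n0*n0*n0*n1 + ((-1:ℝ)/2)*v1*n0*n0*n1*n1*n1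 + ((-1:ℝ)/2)*v1*n0*n0*n1*n2*n2 + ((3:ℝ)/2)*v1*n0*n0*n1 + ((-1:ℝ)/4)*v1*n1*n1*n1*n1*n1 + ((-1:ℝ)/2)*v1*n1*n1*n1*n2*n2 + ((3:ℝ)/2)*v1*n1*n1*n1 + ((-1:ℝ)/4)*v1*n1*n2*n2*n2*n2 + ((3:ℝ)/2)*v1*n1*n2*n2 + ((7:ℝ)/4)*v1*n1 + ((-1:ℝ)/4)*v2*n0*n0*n0*n0*n2 + ((-1:ℝ)/2)*v2*n0*n0*n1*n1*n2 + ((-1:ℝ)/2)*v2*n0*n0*n2*n2*n2 + ((3:ℝ)/2)*v2*n0*n0*n2 + ((-1:ℝ)/4)*v2*n1*n1*n1*n1*n2 + ((-1:ℝ)/2)*v2*n1*n1*n2*n2*n2 + ((3:ℝ)/2)*v2*n1*n1*n2 + ((-1:ℝ)/4)*v2*n2*n2*n2*n2*n2 + ((3:ℝ)/2)*v2*n2*n2*n2 + ((7:ℝ)/4)*v2*n2 + (-1:ℝ)*n0*n0*d00 + (-2:ℝ)*n0*n1*d01 + (-2:ℝ)*n0*n2*d02 + (-1:ℝ)*n1*n1*d11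 + (-2:ℝ)*n1*n2*d12 + (-1:ℝ)*n2*n2*d22 + (-1:ℝ)*d00 + (-1:ℝ)*d11 + (-1:ℝ)*d22) * ha + (((-1:ℝ)/4)*v0*n0*n0*n0*n0*n0*n0 + ((-1:ℝ)/2)*v0*n0*n0*n0*n0*n1*n1 + ((-1:ℝ)/2)*v0*n0*n0*n0*n0*n2*n2 + ((3:ℝ)/2)*v0*n0*n0*n0*n0 + ((-1:ℝ)/4)*v0*n0*n0*n1*n1*n1*n1 + ((-1:ℝ)/2)*v0*n0*n0*n1*n1*n2*n2 + ((3:ℝ)/2)*v0*n0*n0*n1*n1 + ((-1:ℝ)/4)*v0*n0*n0*n2*n2*n2*n2 + ((3:ℝ)/2)*v0*n0*n0*n2*n2 + ((-9:ℝ)/4)*v0*n0*n0 + (-2:ℝ)*v0*n1*n1 + (-2:ℝ)*v0*n2*n2 + (-2:ℝ)*v0 + ((-1:ℝ)/2)*v1*n0*n0*n0*n0*n0*n1 + (-1:ℝ)*v1*n0*n0*n0*n1*n1*n1 + (-1:ℝ)*v1*n0*n0*n0*n1*n2*n2 + (3:ℝ)*v1*n0*n0*n0*n1 + ((-1:ℝ)/2)*v1*n0*n1*n1*n1*n1*n1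 + (-1:ℝ)*v1*n0*n1*n1*n1*n2*n2 + (3:ℝ)*v1*n0*n1*n1*n1 + ((-1:ℝ)/2)*v1*n0*n1*n2*n2*n2*n2 + (3:ℝ)*v1*n0*n1*n2*n2 + ((-1:ℝ)/2)*v1*n0*n1 + ((-1:ℝ)/2)*v2*n0*n0*n0*n0*n0*n2 + (-1:ℝ)*v2*n0*n0*n0*n1*n1*n2 + (-1:ℝ)*v2*n0*n0*n0*n2*n2*n2 + (3:ℝ)*v2*n0*n0*n0*n2 + ((-1:ℝ)/2)*v2*n0*n1*n1*n1*n1*n2 + (-1:ℝ)*v2*n0*n1*n1*n2*n2*n2 + (3:ℝ)*v2*n0*n1*n1*n2 + ((-1:ℝ)/2)*v2*n0*n2*n2*n2*n2*n2 + (3:ℝ)*v2*n0*n2*n2*n2 + ((-1:ℝ)/2)*v2*n0*n2 + ((-1:ℝ)/4)*n0*n0*n0*n0*n0*n0*n0*d00 + ((-1:ℝ)/4)*n0*n0*n0*n0*n0*n0*n1*d01 + ((-1:ℝ)/4)*n0*n0*n0*n0*n0*n0*n2*d02 + ((-1:ℝ)/2)*n0*n0*n0*n0*n0*n1*n1*d00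 + ((-1:ℝ)/2)*n0*n0*n0*n0*n0*n2*n2*d00 + ((3:ℝ)/2)*n0*n0*n0*n0*n0*d00 + ((-1:ℝ)/2)*n0*n0*n0*n0*n1*n1*n1*d01 + ((-1:ℝ)/2)*n0*n0*n0*n0*n1*n1*n2*d02 + ((-1:ℝ)/2)*n0*n0*n0*n0*n1*n2*n2*d01 + ((3:ℝ)/2)*n0*n0*n0*n0*n1*d01 + ((-1:ℝ)/2)*n0*n0*n0*n0*n2*n2*n2*d02 + ((3:ℝ)/2)*n0*n0*n0*n0*n2*d02 + ((-1:ℝ)/4)*n0*n0*n0*n1*n1*n1*n1*d00 + ((-1:ℝ)/2)*n0*n0*n0*n1*n1*n2*n2*d00 + ((3:ℝ)/2)*n0*n0*n0*n1*n1*d00 + ((-1:ℝ)/4)*n0*n0*n0*n2*n2*n2*n2*d00 + ((3:ℝ)/2)*n0*n0*n0*n2*n2*d00 + ((-13:ℝ)/4)*n0*n0*n0*d00 + ((-1:ℝ)/4)*n0*n0*n1*n1*n1*n1*n1*d01 + ((-1:ℝ)/4)*n0*n0*n1*n1*n1*n1*n2*d02 + ((-1:ℝ)/2)*n0*n0*n1*n1*n1*n2*n2*d01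 + ((3:ℝ)/2)*n0*n0*n1*n1*n1*d01 + ((-1:ℝ)/2)*n0*n0*n1*n1*n2*n2*n2*d02 + ((3:ℝ)/2)*n0*n0*n1*n1*n2*d02 + ((-1:ℝ)/4)*n0*n0*n1*n2*n2*n2*n2*d01 + ((3:ℝ)/2)*n0*n0*n1*n2*n2*d01 + ((-17:ℝ)/4)*n0*n0*n1*d01 + ((-1:ℝ)/4)*n0*n0*n2*n2*n2*n2*n2*d02 + ((3:ℝ)/2)*n0*n0*n2*n2*n2*d02 + ((-17:ℝ)/4)*n0*n0*n2*d02 + (-2:ℝ)*n0*n1*n1*d00 + (-1:ℝ)*n0*n1*n1*d11 + (-2:ℝ)*n0*n1*n2*d12 + (-2:ℝ)*n0*n2*n2*d00 + (-1:ℝ)*n0*n2*n2*d22 + (1:ℝ)*n0*d00 + (-1:ℝ)*n0*d11 + (-1:ℝ)*n0*d22 + (-2:ℝ)*n1*n1*n1*d01 + (-2:ℝ)*n1*n1*n2*d02 + (-2:ℝ)*n1*n2*n2*d01 + (2:ℝ)*n1*d01 + (-2:ℝ)*n2*n2*n2*d02 + (2:ℝ)*n2*d02) * hv0 + (((-1:ℝ)/4)*v1*n0*n0*n0*n0*n1*n1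 + ((-1:ℝ)/2)*v1*n0*n0*n1*n1*n1*n1 + ((-1:ℝ)/2)*v1*n0*n0*n1*n1*n2*n2 + ((3:ℝ)/2)*v1*n0*n0*n1*n1 + (-2:ℝ)*v1*n0*n0 + ((-1:ℝ)/4)*v1*n1*n1*n1*n1*n1*n1 + ((-1:ℝ)/2)*v1*n1*n1*n1*n1*n2*n2 + ((3:ℝ)/2)*v1*n1*n1*n1*n1 + ((-1:ℝ)/4)*v1*n1*n1*n2*n2*n2*n2 + ((3:ℝ)/2)*v1*n1*n1*n2*n2 + ((-9:ℝ)/4)*v1*n1*n1 + (-2:ℝ)*v1*n2*n2 + (-2:ℝ)*v1 + ((-1:ℝ)/2)*v2*n0*n0*n0*n0*n1*n2 + (-1:ℝ)*v2*n0*n0*n1*n1*n1*n2 + (-1:ℝ)*v2*n0*n0*n1*n2*n2*n2 + (3:ℝ)*v2*n0*n0*n1*n2 + ((-1:ℝ)/2)*v2*n1*n1*n1*n1*n1*n2 + (-1:ℝ)*v2*n1*n1*n1*n2*n2*n2 + (3:ℝ)*v2*n1*n1*n1*n2 + ((-1:ℝ)/2)*v2*n1*n2*n2*n2*n2*n2 +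 (3:ℝ)*v2*n1*n2*n2*n2 + ((-1:ℝ)/2)*v2*n1*n2 + ((-1:ℝ)/2)*n0*n0*n0*n0*n0*n0*n1*d00 + ((-3:ℝ)/4)*n0*n0*n0*n0*n0*n1*n1*d01 + ((-1:ℝ)/2)*n0*n0*n0*n0*n0*n1*n2*d02 + (-1:ℝ)*n0*n0*n0*n0*n1*n1*n1*d00 + ((-1:ℝ)/4)*n0*n0*n0*n0*n1*n1*n1*d11 + ((-1:ℝ)/4)*n0*n0*n0*n0*n1*n1*n2*d12 + (-1:ℝ)*n0*n0*n0*n0*n1*n2*n2*d00 + (3:ℝ)*n0*n0*n0*n0*n1*d00 + ((-3:ℝ)/2)*n0*n0*n0*n1*n1*n1*n1*d01 + (-1:ℝ)*n0*n0*n0*n1*n1*n1*n2*d02 + ((-3:ℝ)/2)*n0*n0*n0*n1*n1*n2*n2*d01 + ((9:ℝ)/2)*n0*n0*n0*n1*n1*d01 + (-1:ℝ)*n0*n0*n0*n1*n2*n2*n2*d02 + (3:ℝ)*n0*n0*n0*n1*n2*d02 + (-2:ℝ)*n0*n0*n0*d01 + ((-1:ℝ)/2)*n0*n0*n1*n1*n1*n1*n1*d00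 + ((-1:ℝ)/2)*n0*n0*n1*n1*n1*n1*n1*d11 + ((-1:ℝ)/2)*n0*n0*n1*n1*n1*n1*n2*d12 + (-1:ℝ)*n0*n0*n1*n1*n1*n2*n2*d00 + ((-1:ℝ)/2)*n0*n0*n1*n1*n1*n2*n2*d11 + (3:ℝ)*n0*n0*n1*n1*n1*d00 + ((3:ℝ)/2)*n0*n0*n1*n1*n1*d11 + ((-1:ℝ)/2)*n0*n0*n1*n1*n2*n2*n2*d12 + ((3:ℝ)/2)*n0*n0*n1*n1*n2*d12 + ((-1:ℝ)/2)*n0*n0*n1*n2*n2*n2*n2*d00 + (3:ℝ)*n0*n0*n1*n2*n2*d00 + ((-3:ℝ)/2)*n0*n0*n1*d00 + (-2:ℝ)*n0*n0*n1*d11 + (-2:ℝ)*n0*n0*n2*d12 + ((-3:ℝ)/4)*n0*n1*n1*n1*n1*n1*n1*d01 + ((-1:ℝ)/2)*n0*n1*n1*n1*n1*n1*n2*d02 + ((-3:ℝ)/2)*n0*n1*n1*n1*n1*n2*n2*d01 + ((9:ℝ)/2)*n0*n1*n1*n1*n1*d01 + (-1:ℝ)*n0*n1*n1*n1*n2*n2*n2*d02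 + (3:ℝ)*n0*n1*n1*n1*n2*d02 + ((-3:ℝ)/4)*n0*n1*n1*n2*n2*n2*n2*d01 + ((9:ℝ)/2)*n0*n1*n1*n2*n2*d01 + ((-19:ℝ)/4)*n0*n1*n1*d01 + ((-1:ℝ)/2)*n0*n1*n2*n2*n2*n2*n2*d02 + (3:ℝ)*n0*n1*n2*n2*n2*d02 + ((-5:ℝ)/2)*n0*n1*n2*d02 + (-2:ℝ)*n0*n2*n2*d01 + (2:ℝ)*n0*d01 + ((-1:ℝ)/4)*n1*n1*n1*n1*n1*n1*n1*d11 + ((-1:ℝ)/4)*n1*n1*n1*n1*n1*n1*n2*d12 + ((-1:ℝ)/2)*n1*n1*n1*n1*n1*n2*n2*d11 + ((3:ℝ)/2)*n1*n1*n1*n1*n1*d11 + ((-1:ℝ)/2)*n1*n1*n1*n1*n2*n2*n2*d12 + ((3:ℝ)/2)*n1*n1*n1*n1*n2*d12 + ((-1:ℝ)/4)*n1*n1*n1*n2*n2*n2*n2*d11 + ((3:ℝ)/2)*n1*n1*n1*n2*n2*d11 + ((-13:ℝ)/4)*n1*n1*n1*d11 + ((-1:ℝ)/4)*n1*n1*n2*n2*n2*n2*n2*d12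 + ((3:ℝ)/2)*n1*n1*n2*n2*n2*d12 + ((-17:ℝ)/4)*n1*n1*n2*d12 + (-2:ℝ)*n1*n2*n2*d11 + (-1:ℝ)*n1*n2*n2*d22 + (-1:ℝ)*n1*d00 + (1:ℝ)*n1*d11 + (-1:ℝ)*n1*d22 + (-2:ℝ)*n2*n2*n2*d12 + (2:ℝ)*n2*d12) * hv1 + (((-1:ℝ)/4)*v2*n0*n0*n0*n0*n2*n2 + ((-1:ℝ)/2)*v2*n0*n0*n1*n1*n2*n2 + ((-1:ℝ)/2)*v2*n0*n0*n2*n2*n2*n2 + ((3:ℝ)/2)*v2*n0*n0*n2*n2 + (-2:ℝ)*v2*n0*n0 + ((-1:ℝ)/4)*v2*n1*n1*n1*n1*n2*n2 + ((-1:ℝ)/2)*v2*n1*n1*n2*n2*n2*n2 + ((3:ℝ)/2)*v2*n1*n1*n2*n2 + (-2:ℝ)*v2*n1*n1 + ((-1:ℝ)/4)*v2*n2*n2*n2*n2*n2*n2 + ((3:ℝ)/2)*v2*n2*n2*n2*n2 + ((-9:ℝ)/4)*v2*n2*n2 + (-2:ℝ)*v2 + ((-1:ℝ)/2)*n0*n0*n0*n0*n0*n0*n2*d00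 + (-1:ℝ)*n0*n0*n0*n0*n0*n1*n2*d01 + ((-3:ℝ)/4)*n0*n0*n0*n0*n0*n2*n2*d02 + (-1:ℝ)*n0*n0*n0*n0*n1*n1*n2*d00 + ((-1:ℝ)/2)*n0*n0*n0*n0*n1*n1*n2*d11 + ((-3:ℝ)/4)*n0*n0*n0*n0*n1*n2*n2*d12 + (-1:ℝ)*n0*n0*n0*n0*n2*n2*n2*d00 + ((-1:ℝ)/4)*n0*n0*n0*n0*n2*n2*n2*d22 + (3:ℝ)*n0*n0*n0*n0*n2*d00 + (-2:ℝ)*n0*n0*n0*n1*n1*n1*n2*d01 + ((-3:ℝ)/2)*n0*n0*n0*n1*n1*n2*n2*d02 + (-2:ℝ)*n0*n0*n0*n1*n2*n2*n2*d01 + (6:ℝ)*n0*n0*n0*n1*n2*d01 + ((-3:ℝ)/2)*n0*n0*n0*n2*n2*n2*n2*d02 + ((9:ℝ)/2)*n0*n0*n0*n2*n2*d02 + (-2:ℝ)*n0*n0*n0*d02 + ((-1:ℝ)/2)*n0*n0*n1*n1*n1*n1*n2*d00 + (-1:ℝ)*n0*n0*n1*n1*n1*n1*n2*d11 + ((-3:ℝ)/2)*n0*n0*n1*n1*n1*n2*n2*d12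 + (-1:ℝ)*n0*n0*n1*n1*n2*n2*n2*d00 + (-1:ℝ)*n0*n0*n1*n1*n2*n2*n2*d11 + ((-1:ℝ)/2)*n0*n0*n1*n1*n2*n2*n2*d22 + (3:ℝ)*n0*n0*n1*n1*n2*d00 + (3:ℝ)*n0*n0*n1*n1*n2*d11 + ((-3:ℝ)/2)*n0*n0*n1*n2*n2*n2*n2*d12 + ((9:ℝ)/2)*n0*n0*n1*n2*n2*d12 + (-2:ℝ)*n0*n0*n1*d12 + ((-1:ℝ)/2)*n0*n0*n2*n2*n2*n2*n2*d00 + ((-1:ℝ)/2)*n0*n0*n2*n2*n2*n2*n2*d22 + (3:ℝ)*n0*n0*n2*n2*n2*d00 + ((3:ℝ)/2)*n0*n0*n2*n2*n2*d22 + ((-3:ℝ)/2)*n0*n0*n2*d00 + (-2:ℝ)*n0*n0*n2*d22 + (-1:ℝ)*n0*n1*n1*n1*n1*n1*n2*d01 + ((-3:ℝ)/4)*n0*n1*n1*n1*n1*n2*n2*d02 + (-2:ℝ)*n0*n1*n1*n1*n2*n2*n2*d01 + (6:ℝ)*n0*n1*n1*n1*n2*d01 + ((-3:ℝ)/2)*n0*n1*n1*n2*n2*n2*n2*d02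 + ((9:ℝ)/2)*n0*n1*n1*n2*n2*d02 + (-2:ℝ)*n0*n1*n1*d02 + (-1:ℝ)*n0*n1*n2*n2*n2*n2*n2*d01 + (6:ℝ)*n0*n1*n2*n2*n2*d01 + (-3:ℝ)*n0*n1*n2*d01 + ((-3:ℝ)/4)*n0*n2*n2*n2*n2*n2*n2*d02 + ((9:ℝ)/2)*n0*n2*n2*n2*n2*d02 + ((-19:ℝ)/4)*n0*n2*n2*d02 + (2:ℝ)*n0*d02 + ((-1:ℝ)/2)*n1*n1*n1*n1*n1*n1*n2*d11 + ((-3:ℝ)/4)*n1*n1*n1*n1*n1*n2*n2*d12 + (-1:ℝ)*n1*n1*n1*n1*n2*n2*n2*d11 + ((-1:ℝ)/4)*n1*n1*n1*n1*n2*n2*n2*d22 + (3:ℝ)*n1*n1*n1*n1*n2*d11 + ((-3:ℝ)/2)*n1*n1*n1*n2*n2*n2*n2*d12 + ((9:ℝ)/2)*n1*n1*n1*n2*n2*d12 + (-2:ℝ)*n1*n1*n1*d12 + ((-1:ℝ)/2)*n1*n1*n2*n2*n2*n2*n2*d11 + ((-1:ℝ)/2)*n1*n1*n2*n2*n2*n2*n2*d22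 + (3:ℝ)*n1*n1*n2*n2*n2*d11 + ((3:ℝ)/2)*n1*n1*n2*n2*n2*d22 + ((-3:ℝ)/2)*n1*n1*n2*d11 + (-2:ℝ)*n1*n1*n2*d22 + ((-3:ℝ)/4)*n1*n2*n2*n2*n2*n2*n2*d12 + ((9:ℝ)/2)*n1*n2*n2*n2*n2*d12 + ((-19:ℝ)/4)*n1*n2*n2*d12 + (2:ℝ)*n1*d12 + ((-1:ℝ)/4)*n2*n2*n2*n2*n2*n2*n2*d22 + ((3:ℝ)/2)*n2*n2*n2*n2*n2*d22 + ((-13:ℝ)/4)*n2*n2*n2*d22 + (-1:ℝ)*n2*d00 + (-1:ℝ)*n2*d11 + (1:ℝ)*n2*d22) * hv2 + (((-1:ℝ)/4)*n0*n0*n0*n0*n0*n0*d00*d00 + (-1:ℝ)*n0*n0*n0*n0*n0*n1*d00*d01 + (-1:ℝ)*n0*n0*n0*n0*n0*n2*d00*d02 + ((-1:ℝ)/4)*n0*n0*n0*n0*n1*n1*d00*d00 + ((-1:ℝ)/2)*n0*n0*n0*n0*n1*n1*d00*d11 + (-1:ℝ)*n0*n0*n0*n0*n1*n1*d01*d01 +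 (-1:ℝ)*n0*n0*n0*n0*n1*n2*d00*d12 + (-2:ℝ)*n0*n0*n0*n0*n1*n2*d01*d02 + ((-1:ℝ)/4)*n0*n0*n0*n0*n2*n2*d00*d00 + ((-1:ℝ)/2)*n0*n0*n0*n0*n2*n2*d00*d22 + (-1:ℝ)*n0*n0*n0*n0*n2*n2*d02*d02 + ((5:ℝ)/4)*n0*n0*n0*n0*d00*d00 + (-1:ℝ)*n0*n0*n0*n1*n1*n1*d00*d01 + (-1:ℝ)*n0*n0*n0*n1*n1*n1*d01*d11 + (-1:ℝ)*n0*n0*n0*n1*n1*n2*d00*d02 + (-2:ℝ)*n0*n0*n0*n1*n1*n2*d01*d12 + (-1:ℝ)*n0*n0*n0*n1*n1*n2*d02*d11 + (-1:ℝ)*n0*n0*n0*n1*n2*n2*d00*d01 + (-1:ℝ)*n0*n0*n0*n1*n2*n2*d01*d22 + (-2:ℝ)*n0*n0*n0*n1*n2*n2*d02*d12 + (5:ℝ)*n0*n0*n0*n1*d00*d01 + (-1:ℝ)*n0*n0*n0*n2*n2*n2*d00*d02 + (-1:ℝ)*n0*n0*n0*n2*n2*n2*d02*d22 + (5:ℝ)*n0*n0*n0*n2*d00*d02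 + ((-1:ℝ)/2)*n0*n0*n1*n1*n1*n1*d00*d11 + (-1:ℝ)*n0*n0*n1*n1*n1*n1*d01*d01 + ((-1:ℝ)/4)*n0*n0*n1*n1*n1*n1*d11*d11 + (-1:ℝ)*n0*n0*n1*n1*n1*n2*d00*d12 + (-2:ℝ)*n0*n0*n1*n1*n1*n2*d01*d02 + (-1:ℝ)*n0*n0*n1*n1*n1*n2*d11*d12 + ((-1:ℝ)/2)*n0*n0*n1*n1*n2*n2*d00*d11 + ((-1:ℝ)/2)*n0*n0*n1*n1*n2*n2*d00*d22 + (-1:ℝ)*n0*n0*n1*n1*n2*n2*d01*d01 + (-1:ℝ)*n0*n0*n1*n1*n2*n2*d02*d02 + ((-1:ℝ)/2)*n0*n0*n1*n1*n2*n2*d11*d22 + (-1:ℝ)*n0*n0*n1*n1*n2*n2*d12*d12 + ((5:ℝ)/2)*n0*n0*n1*n1*d00*d11 + (5:ℝ)*n0*n0*n1*n1*d01*d01 + (-1:ℝ)*n0*n0*n1*n2*n2*n2*d00*d12 + (-2:ℝ)*n0*n0*n1*n2*n2*n2*d01*d02 + (-1:ℝ)*n0*n0*n1*n2*n2*n2*d12*d22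 + (5:ℝ)*n0*n0*n1*n2*d00*d12 + (10:ℝ)*n0*n0*n1*n2*d01*d02 + ((-1:ℝ)/2)*n0*n0*n2*n2*n2*n2*d00*d22 + (-1:ℝ)*n0*n0*n2*n2*n2*n2*d02*d02 + ((-1:ℝ)/4)*n0*n0*n2*n2*n2*n2*d22*d22 + ((5:ℝ)/2)*n0*n0*n2*n2*d00*d22 + (5:ℝ)*n0*n0*n2*n2*d02*d02 + (-2:ℝ)*n0*n0*d00*d00 + (-2:ℝ)*n0*n0*d01*d01 + (-2:ℝ)*n0*n0*d02*d02 + (-1:ℝ)*n0*n1*n1*n1*n1*n1*d01*d11 + (-2:ℝ)*n0*n1*n1*n1*n1*n2*d01*d12 + (-1:ℝ)*n0*n1*n1*n1*n1*n2*d02*d11 + (-1:ℝ)*n0*n1*n1*n1*n2*n2*d01*d11 + (-1:ℝ)*n0*n1*n1*n1*n2*n2*d01*d22 + (-2:ℝ)*n0*n1*n1*n1*n2*n2*d02*d12 + (5:ℝ)*n0*n1*n1*n1*d01*d11 + (-2:ℝ)*n0*n1*n1*n2*n2*n2*d01*d12 + (-1:ℝ)*n0*n1*n1*n2*n2*n2*d02*d11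 + (-1:ℝ)*n0*n1*n1*n2*n2*n2*d02*d22 + (10:ℝ)*n0*n1*n1*n2*d01*d12 + (5:ℝ)*n0*n1*n1*n2*d02*d11 + (-1:ℝ)*n0*n1*n2*n2*n2*n2*d01*d22 + (-2:ℝ)*n0*n1*n2*n2*n2*n2*d02*d12 + (5:ℝ)*n0*n1*n2*n2*d01*d22 + (10:ℝ)*n0*n1*n2*n2*d02*d12 + (-4:ℝ)*n0*n1*d00*d01 + (-4:ℝ)*n0*n1*d01*d11 + (-4:ℝ)*n0*n1*d02*d12 + (-1:ℝ)*n0*n2*n2*n2*n2*n2*d02*d22 + (5:ℝ)*n0*n2*n2*n2*d02*d22 + (-4:ℝ)*n0*n2*d00*d02 + (-4:ℝ)*n0*n2*d01*d12 + (-4:ℝ)*n0*n2*d02*d22 + ((-1:ℝ)/4)*n1*n1*n1*n1*n1*n1*d11*d11 + (-1:ℝ)*n1*n1*n1*n1*n1*n2*d11*d12 + ((-1:ℝ)/4)*n1*n1*n1*n1*n2*n2*d11*d11 + ((-1:ℝ)/2)*n1*n1*n1*n1*n2*n2*d11*d22 + (-1:ℝ)*n1*n1*n1*n1*n2*n2*d12*d12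 + ((5:ℝ)/4)*n1*n1*n1*n1*d11*d11 + (-1:ℝ)*n1*n1*n1*n2*n2*n2*d11*d12 + (-1:ℝ)*n1*n1*n1*n2*n2*n2*d12*d22 + (5:ℝ)*n1*n1*n1*n2*d11*d12 + ((-1:ℝ)/2)*n1*n1*n2*n2*n2*n2*d11*d22 + (-1:ℝ)*n1*n1*n2*n2*n2*n2*d12*d12 + ((-1:ℝ)/4)*n1*n1*n2*n2*n2*n2*d22*d22 + ((5:ℝ)/2)*n1*n1*n2*n2*d11*d22 + (5:ℝ)*n1*n1*n2*n2*d12*d12 + (-2:ℝ)*n1*n1*d01*d01 + (-2:ℝ)*n1*n1*d11*d11 + (-2:ℝ)*n1*n1*d12*d12 + (-1:ℝ)*n1*n2*n2*n2*n2*n2*d12*d22 + (5:ℝ)*n1*n2*n2*n2*d12*d22 + (-4:ℝ)*n1*n2*d01*d02 + (-4:ℝ)*n1*n2*d11*d12 + (-4:ℝ)*n1*n2*d12*d22 + ((-1:ℝ)/4)*n2*n2*n2*n2*n2*n2*d22*d22 + ((5:ℝ)/4)*n2*n2*n2*n2*d22*d22 + (-2:ℝ)*n2*n2*d02*d02 +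 (-2:ℝ)*n2*n2*d12*d12 + (-2:ℝ)*n2*n2*d22*d22 + (-1:ℝ)*d00*d00 + (-1:ℝ)*d00*d11 + (-1:ℝ)*d00*d22) * hn + ((-2:ℝ)*n0*n1*d01 + (-2:ℝ)*n0*n2*d02 + (1:ℝ)*n1*n1*d00 + (-1:ℝ)*n1*n1*d11 + (-2:ℝ)*n1*n2*d12 + (1:ℝ)*n2*n2*d00 + (-1:ℝ)*n2*n2*d22 + (-1:ℝ)*d00) * hd
  have hSpos : (0:ℝ) ≤ (d00^2+d01^2+d02^2+d01^2+d11^2+d12^2+d02^2+d12^2+d22^2) + a^2/2 - 2*(v0^2+v1^2+v2^2) := by rw [hS]; positivity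
  have hv : (v0^2+v1^2+v2^2) - a^2 = ((n0*v1-n1*v0)^2 + (n0*v2-n2*v0)^2 + (n1*v2-n2*v1)^2) := by
    linear_combination ((-1:ℝ)*a + (-1:ℝ)*v0*n0 + (-1:ℝ)*v1*n1 + (-1:ℝ)*v2*n2) * ha + ((-1:ℝ)*v0*n0*n0 + (-1:ℝ)*v0*n1*n1 + (-1:ℝ)*v0*n2*n2 + (1:ℝ)*v0 + (-1:ℝ)*n0*n0*n0*d00 + (-1:ℝ)*n0*n0*n1*d01 + (-1:ℝ)*n0*n0*n2*d02 + (-1:ℝ)*n0*n1*n1*d00 + (-1:ℝ)*n0*n2*n2*d00 + (1:ℝ)*n0*d00 + (-1:ℝ)*n1*n1*n1*d01 + (-1:ℝ)*n1*n1*n2*d02 + (-1:ℝ)*n1*n2*n2*d01 + (1:ℝ)*n1*d01 + (-1:ℝ)*n2*n2*n2*d02 + (1:ℝ)*n2*d02) * hv0 + ((-1:ℝ)*v1*n0*n0 + (-1:ℝ)*v1*n1*n1 + (-1:ℝ)*v1*n2*n2 + (1:ℝ)*v1 + (-1:ℝ)*n0*n0*n0*d01 + (-1:ℝ)*n0*n0*n1*d11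 + (-1:ℝ)*n0*n0*n2*d12 + (-1:ℝ)*n0*n1*n1*d01 + (-1:ℝ)*n0*n2*n2*d01 + (1:ℝ)*n0*d01 + (-1:ℝ)*n1*n1*n1*d11 + (-1:ℝ)*n1*n1*n2*d12 + (-1:ℝ)*n1*n2*n2*d11 + (1:ℝ)*n1*d11 + (-1:ℝ)*n2*n2*n2*d12 + (1:ℝ)*n2*d12) * hv1 + ((-1:ℝ)*v2*n0*n0 + (-1:ℝ)*v2*n1*n1 + (-1:ℝ)*v2*n2*n2 + (1:ℝ)*v2 + (-1:ℝ)*n0*n0*n0*d02 + (-1:ℝ)*n0*n0*n1*d12 + (-1:ℝ)*n0*n0*n2*d22 + (-1:ℝ)*n0*n1*n1*d02 + (-1:ℝ)*n0*n2*n2*d02 + (1:ℝ)*n0*d02 + (-1:ℝ)*n1*n1*n1*d12 + (-1:ℝ)*n1*n1*n2*d22 + (-1:ℝ)*n1*n2*n2*d12 + (1:ℝ)*n1*d12 + (-1:ℝ)*n2*n2*n2*d22 + (1:ℝ)*n2*d22) * hv2 + ((-1:ℝ)*n0*n0*d00*d00 + (-1:ℝ)*n0*n0*d01*d01 + (-1:ℝ)*n0*n0*d02*d02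 + (-2:ℝ)*n0*n1*d00*d01 + (-2:ℝ)*n0*n1*d01*d11 + (-2:ℝ)*n0*n1*d02*d12 + (-2:ℝ)*n0*n2*d00*d02 + (-2:ℝ)*n0*n2*d01*d12 + (-2:ℝ)*n0*n2*d02*d22 + (-1:ℝ)*n1*n1*d01*d01 + (-1:ℝ)*n1*n1*d11*d11 + (-1:ℝ)*n1*n1*d12*d12 + (-2:ℝ)*n1*n2*d01*d02 + (-2:ℝ)*n1*n2*d11*d12 + (-2:ℝ)*n1*n2*d12*d22 + (-1:ℝ)*n2*n2*d02*d02 + (-1:ℝ)*n2*n2*d12*d12 + (-1:ℝ)*n2*n2*d22*d22) * hn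
  have hCS : a^2 ≤ (v0^2+v1^2+v2^2) := by linarith [hv, sq_nonneg (n0*v1-n1*v0), sq_nonneg (n0*v2-n2*v0), sq_nonneg (n1*v2-n2*v1)]
  linarith [mul_nonneg hb2 hSpos, mul_nonneg hb23 (sub_nonneg.2 hCS),
    mul_nonneg hb123 (sq_nonneg a)]

theorem dissipation_relation_characterization (β₁ β₂ β₃ : ℝ) :
    (∀ (D : Matrix (Fin 3) (Fin 3) ℝ) (n : Fin 3 → ℝ),
        Dᵀ = D → D.trace = 0 → n ⬝ᵥ n = 1 →
        0 ≤ β₁ * (frob (vecMulVec n n) D) ^ 2 + β₂ * frob D D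
            + β₃ * ((D *ᵥ n) ⬝ᵥ (D *ᵥ n)))
    ↔ (0 ≤ β₂ ∧ 0 ≤ 2 * β₂ + β₃ ∧ 0 ≤ 3 / 2 * β₂ + β₃ + β₁) := by
  constructor
  · intro h
    have h1 := h !![0,1,0;1,0,0;0,0,0] ![0,0,1]
      (by ext i j; fin_cases i <;> fin_cases j <;> simp [Matrix.vecHead, Matrix.vecTail])
      (by simp [Matrix.trace, Matrix.diag, Fin.sum_univ_three, Matrix.vecHead, Matrix.vecTail])
      (by simp [dotProduct, Fin.sum_univ_three])
    have h2 := h !![0,0,1;0,0,0;1,0,0] ![0,0,1]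
      (by ext i j; fin_cases i <;> fin_cases j <;> simp [Matrix.vecHead, Matrix.vecTail])
      (by simp [Matrix.trace, Matrix.diag, Fin.sum_univ_three, Matrix.vecHead, Matrix.vecTail])
      (by simp [dotProduct, Fin.sum_univ_three])
    have h3 := h !![-(1/2),0,0;0,-(1/2),0;0,0,1] ![0,0,1]
      (by ext i j; fin_cases i <;> fin_cases j <;> simp [Matrix.vecHead, Matrix.vecTail])
      (by simp [Matrix.trace, Matrix.diag, Fin.sum_univ_three, Matrix.vecHead, Matrix.vecTail]; norm_num)
      (by simp [dotProduct, Fin.sum_univ_three])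
    simp only [frob, vecMulVec_apply, mulVec, dotProduct, Fin.sum_univ_three] at h1 h2 h3
    norm_num [Matrix.cons_val_two, Matrix.cons_val_zero, Matrix.cons_val_one, Matrix.head_cons, Matrix.vecHead, Matrix.vecTail] at h1 h2 h3
    refine ⟨by linarith, by linarith, by linarith⟩
  · rintro ⟨hb2, hb23, hb123⟩ D n hsym htr hn
    have h10 : D 1 0 = D 0 1 := by simpa using congrFun (congrFun hsym 0) 1
    have h20 : D 2 0 = D 0 2 := by simpa using congrFun (congrFun hsym 0) 2
    have h21 : D 2 1 = D 1 2 := by simpa using congrFun (congrFun hsym 1) 2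
    have htr' : D 0 0 + D 1 1 + D 2 2 = 0 := by
      simpa [Matrix.trace, Matrix.diag, Fin.sum_univ_three] using htr
    have hn' : (n 0)^2 + (n 1)^2 + (n 2)^2 = 1 := by
      simp only [dotProduct, Fin.sum_univ_three] at hn; linear_combination hn
    have hv0 : (D *ᵥ n) 0 = D 0 0 * n 0 + D 0 1 * n 1 + D 0 2 * n 2 := by
      simp [mulVec, dotProduct, Fin.sum_univ_three]
    have hv1 : (D *ᵥ n) 1 = D 0 1 * n 0 + D 1 1 * n 1 + D 1 2 * n 2 := by
      simp only [mulVec, dotProduct, Fin.sum_univ_three]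
      linear_combination n 0 * h10
    have hv2 : (D *ᵥ n) 2 = D 0 2 * n 0 + D 1 2 * n 1 + D 2 2 * n 2 := by
      simp only [mulVec, dotProduct, Fin.sum_univ_three]
      linear_combination n 0 * h20 + n 1 * h21
    have ha : (n ⬝ᵥ (D *ᵥ n))
        = n 0 * (D *ᵥ n) 0 + n 1 * (D *ᵥ n) 1 + n 2 * (D *ᵥ n) 2 := by
      simp [dotProduct, Fin.sum_univ_three]
    have K := key β₁ β₂ β₃ (n ⬝ᵥ (D *ᵥ n)) ((D *ᵥ n) 0) ((D *ᵥ n) 1) ((D *ᵥ n) 2)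
      (n 0) (n 1) (n 2) (D 0 0) (D 0 1) (D 0 2) (D 1 1) (D 1 2) (D 2 2)
      hb2 hb23 hb123 ha hv0 hv1 hv2 hn' htr'
    have e1 : frob (vecMulVec n n) D = n ⬝ᵥ (D *ᵥ n) := by
      simp [frob, vecMulVec_apply, mulVec, dotProduct, Fin.sum_univ_three]; ring
    have e2 : frob D D = D 0 0^2 + D 0 1^2 + D 0 2^2 + D 0 1^2 + D 1 1^2 + D 1 2^2
        + D 0 2^2 + D 1 2^2 + D 2 2^2 := by
      simp [frob, Fin.sum_univ_three]
      linear_combination (D 1 0 + D 0 1) * h10 + (D 2 0 + D 0 2) * h20 + (D 2 1 + D 1 2) * h21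
    have e3 : (D *ᵥ n) ⬝ᵥ (D *ᵥ n) = ((D *ᵥ n) 0)^2 + ((D *ᵥ n) 1)^2 + ((D *ᵥ n) 2)^2 := by
      simp [dotProduct, Fin.sum_univ_three]; ring
    rw [e1, e2, e3]
    linarith [K]
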